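/- For every real t there exists an angle θ ∈ ℝ such that for all real u, v one has I₃'(u cos θ − v sin θ, u sin θ + v cos θ, t) = (R² + d² − 2dR cos t)·((R + d)²u² + (R − d)²v² − (R² − d²)²). In particular the zero set of I₃'(·, ·, t) is an ellipse centered at the origin X₄₀ with semiaxis lengths R + d and R − d, independent of t. -/

import Mathlib

noncomputable section

/-- The polynomial `I₃'(x, y, t)` defining the excentral `X₃`-centered inconic. -/
def I3 (R d t x y : ℝ) : ℝ :=
  ((R ^ 2 - d ^ 2) ^ 2 - 8 * d * R ^ 2 * (R * Real.cos t - d) * Real.sin t ^ 2) * x ^ 2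
  + ((R ^ 2 - d ^ 2) ^ 2
      - 4 * d * R * Real.cos t * ((R * Real.cos t - d) ^ 2 - R ^ 2 * Real.sin t ^ 2)) * y ^ 2
  + 4 * d * R * Real.sin t * (2 * R * Real.cos t - R - d) * (2 * R * Real.cos t + R - d)
      * (x * y)
  - (R ^ 2 - d ^ 2) ^ 2 * (R ^ 2 + d ^ 2 - 2 * d * R * Real.cos t)

/-- Abstract rotation lemma: a binary quadratic form `A x² + B y² + 2p xy` whose
coefficients satisfy the trace identity `A + B = L1 + L2` and the eigenvalue identity
`p² = (L1 - A)(L1 - B)` can be rotated into the diagonal form `L1 u² + L2 v²`. -/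
theorem rot_diag (A B p L1 L2 : ℝ) (h1 : A + B = L1 + L2)
    (h2 : p ^ 2 = (L1 - A) * (L1 - B)) :
    ∃ θ : ℝ, ∀ u v : ℝ,
      A * (u * Real.cos θ - v * Real.sin θ) ^ 2
        + B * (u * Real.sin θ + v * Real.cos θ) ^ 2
        + 2 * p * ((u * Real.cos θ - v * Real.sin θ) * (u * Real.sin θ + v * Real.cos θ))
        = L1 * u ^ 2 + L2 * v ^ 2 := by
  by_cases hz : p = 0 ∧ L1 - A = 0
  · obtain ⟨hp, hq⟩ := hz
    refine ⟨0, fun u v => ?_⟩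
    rw [Real.cos_zero, Real.sin_zero]
    linear_combination (2 * ((u * 1 - v * 0) * (u * 0 + v * 1))) * hp
      + (v ^ 2) * h1 + (v ^ 2 - u ^ 2) * hq
  · set z : ℂ := ⟨p, L1 - A⟩ with hzdef
    have hz0 : z ≠ 0 := by
      intro h
      apply hz
      have hre : z.re = 0 := by rw [h]; rfl
      have him : z.im = 0 := by rw [h]; rfl
      exact ⟨hre, him⟩
    set n : ℝ := ‖z‖ with hndef
    have hn0 : n ≠ 0 := norm_ne_zero_iff.mpr hz0
    have ha : Real.cos z.arg = p / n := by
      rw [Complex.cos_arg hz0]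
    have hb : Real.sin z.arg = (L1 - A) / n := by
      rw [Complex.sin_arg]
    have hn2 : n ^ 2 = p ^ 2 + (L1 - A) ^ 2 := by
      rw [hndef, Complex.sq_norm, Complex.normSq_apply]
      ring
    -- key algebraic identities
    have key1 : A * p ^ 2 + B * (L1 - A) ^ 2 + 2 * p * (p * (L1 - A)) = L1 * n ^ 2 := by
      linear_combination (-L1) * hn2 + (L1 - A) * h2
    have key3 : 2 * (B - A) * (p * (L1 - A)) + 2 * p * (p ^ 2 - (L1 - A) ^ 2) = 0 := by
      linear_combination (2 * p) * h2
    have e1 : A * Real.cos z.arg ^ 2 + B * Real.sin z.arg ^ 2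
        + 2 * p * (Real.cos z.arg * Real.sin z.arg) = L1 := by
      rw [ha, hb]
      field_simp
      linear_combination key1
    have e3 : 2 * (B - A) * (Real.cos z.arg * Real.sin z.arg)
        + 2 * p * (Real.cos z.arg ^ 2 - Real.sin z.arg ^ 2) = 0 := by
      rw [ha, hb]
      field_simp
      linear_combination key3
    have e2 : A * Real.sin z.arg ^ 2 + B * Real.cos z.arg ^ 2
        - 2 * p * (Real.cos z.arg * Real.sin z.arg) = L2 := by
      linear_combination (A + B) * (Real.sin_sq_add_cos_sq z.arg) - e1 + h1
    refine ⟨z.arg, fun u v => ?_⟩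
    linear_combination u ^ 2 * e1 + v ^ 2 * e2 + (u * v) * e3

/-- there is a rotation `θ` putting `I₃'(·,·,t)` in canonical form
`(R² + d² − 2dR cos t)·((R+d)²u² + (R−d)²v² − (R²−d²)²)`; hence its zero set is an
ellipse centered at the origin with semiaxes `R + d` and `R − d`, independent of `t`. -/
theorem I3_canonical_form (R d : ℝ) (hd : 0 < d) (hdR : d < R) (t : ℝ) :
    ∃ θ : ℝ, ∀ u v : ℝ,
      I3 R d t (u * Real.cos θ - v * Real.sin θ) (u * Real.sin θ + v * Real.cos θ)
        = (R ^ 2 + d ^ 2 - 2 * d * R * Real.cos t) *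
            ((R + d) ^ 2 * u ^ 2 + (R - d) ^ 2 * v ^ 2 - (R ^ 2 - d ^ 2) ^ 2) := by
  set c := Real.cos t with hc
  set s := Real.sin t with hsd
  have hs : s ^ 2 + c ^ 2 = 1 := Real.sin_sq_add_cos_sq t
  set A : ℝ := (R ^ 2 - d ^ 2) ^ 2 - 8 * d * R ^ 2 * (R * c - d) * s ^ 2 with hA
  set B : ℝ := (R ^ 2 - d ^ 2) ^ 2 - 4 * d * R * c * ((R * c - d) ^ 2 - R ^ 2 * s ^ 2) with hB
  set p : ℝ := 2 * d * R * s * (2 * R * c - R - d) * (2 * R * c + R - d) with hp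
  set M : ℝ := R ^ 2 + d ^ 2 - 2 * d * R * c with hM
  have h1 : A + B = M * (R + d) ^ 2 + M * (R - d) ^ 2 := by
    rw [hA, hB, hM]
    linear_combination (8 * R ^ 2 * d ^ 2 - 4 * R ^ 3 * d * c) * hs
  have h2 : p ^ 2 = (M * (R + d) ^ 2 - A) * (M * (R + d) ^ 2 - B) := by
    rw [hA, hB, hp, hM]
    linear_combination (4 * R ^ 2 * d ^ 6 + 16 * R ^ 3 * d ^ 5 - 16 * R ^ 3 * d ^ 5 * c
      + 24 * R ^ 4 * d ^ 4 - 40 * R ^ 4 * d ^ 4 * c + 8 * R ^ 4 * d ^ 4 * c ^ 2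
      + 16 * R ^ 5 * d ^ 3 - 32 * R ^ 5 * d ^ 3 * c - 32 * R ^ 5 * d ^ 3 * c * s ^ 2
      + 16 * R ^ 5 * d ^ 3 * c ^ 2 + 4 * R ^ 6 * d ^ 2 - 8 * R ^ 6 * d ^ 2 * c
      + 8 * R ^ 6 * d ^ 2 * c ^ 2 + 32 * R ^ 6 * d ^ 2 * c ^ 2 * s ^ 2) * hs
  obtain ⟨θ, hθ⟩ := rot_diag A B p (M * (R + d) ^ 2) (M * (R - d) ^ 2) h1 h2
  refine ⟨θ, fun u v => ?_⟩
  have := hθ u v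
  simp only [I3, ← hc, ← hsd, ← hA, ← hB, ← hM]
  linear_combination this

end
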